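/- Under the isomorphism φ: C(kΓ) → R(Γ) of the previous statement, the standard bilinear form on class functions satisfies ⟨φ(α), φ(β)⟩ = tr(α ⋄ β) for all α, β ∈ C(kΓ), where ⟨f,g⟩ = (1/|Γ|)∑_{y∈Γ} f(y)g(y^{-1}). -/

import Mathlib

open MonoidAlgebra

lemma mul_apply_one' {k Γ : Type*} [Field k] [Group Γ] [Fintype Γ] [DecidableEq Γ]
    (c d : MonoidAlgebra k Γ) : (c * d).coeff 1 = ∑ x : Γ, c.coeff x * d.coeff x⁻¹ := by
  induction c using MonoidAlgebra.induction_linear with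
  | zero => simp
  | add f g hf hg =>
      rw [add_mul, coeff_add, Finsupp.add_apply, hf, hg, ← Finset.sum_add_distrib]
      exact Finset.sum_congr rfl fun x _ => by rw [coeff_add, Finsupp.add_apply, add_mul]
  | single t r =>
      rw [coeff_single_mul_apply]
      rw [Fintype.sum_eq_single t (by intro x hx; simp [coeff_single, Finsupp.single_apply, (hx.symm : ¬ t = x)])]
      simp [coeff_single, Finsupp.single_apply]

/-- Under `φ : C(kΓ) → R(Γ)`, `φ(⟨a⟩)(z) = tr(a ⋄ z)`, the standard bilinear form on class
functions satisfies `⟨φ(α), φ(β)⟩ = tr(α ⋄ β)`, where `⟨f,g⟩ = (1/|Γ|) ∑_y f(y) g(y⁻¹)`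
and `tr` is the coefficient of the identity. -/
theorem stmt14 {k Γ : Type*} [Field k] [CharZero k] [Group Γ] [Fintype Γ] [DecidableEq Γ]
    (diam : MonoidAlgebra k Γ → MonoidAlgebra k Γ → MonoidAlgebra k Γ)
    (hdiam : ∀ a b, diam a b = ∑ g : Γ, a * single g 1 * b * single g⁻¹ 1)
    (Φ : MonoidAlgebra k Γ → Γ → k)
    (hΦ : ∀ a z, Φ a z = (diam a (single z 1)).coeff 1)
    (a b : MonoidAlgebra k Γ) :
    (Fintype.card Γ : k)⁻¹ * ∑ y : Γ, Φ a y * Φ b y⁻¹ = (diam a b).coeff 1 := by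
  have hcard : (Fintype.card Γ : k) ≠ 0 := Nat.cast_ne_zero.2 Fintype.card_ne_zero
  have hPhi : ∀ (c : MonoidAlgebra k Γ) (z : Γ), Φ c z = ∑ g : Γ, c.coeff (g * z⁻¹ * g⁻¹) := by
    intro c z
    rw [hΦ, hdiam, coeff_sum, Finset.sum_apply']
    refine Finset.sum_congr rfl fun g _ => ?_
    rw [mul_assoc, mul_assoc, single_mul_single, single_mul_single, one_mul, coeff_mul_single_apply]
    simp [mul_inv_rev, mul_assoc]
  set C : k := ∑ u : Γ, ∑ h : Γ, a.coeff u * b.coeff (h * u⁻¹ * h⁻¹) with hC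
  have hR : (diam a b).coeff 1 = C := by
    rw [hdiam, coeff_sum, Finset.sum_apply']
    have key : ∀ g : Γ, ((a * single g 1 * b * single g⁻¹ 1 : MonoidAlgebra k Γ)).coeff 1
        = ∑ u : Γ, a.coeff u * b.coeff (g⁻¹ * u⁻¹ * g) := by
      intro g
      rw [mul_assoc, mul_apply_one']
      refine Fintype.sum_equiv (Equiv.mulRight g⁻¹) _ _ fun x => ?_
      rw [coeff_mul_single_apply, coeff_mul_single_apply]
      simp [mul_assoc, mul_inv_rev]
    rw [Finset.sum_congr rfl fun g _ => key g]
    rw [Fintype.sum_equiv (Equiv.inv Γ)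
      (fun g => ∑ u : Γ, a.coeff u * b.coeff (g⁻¹ * u⁻¹ * g))
      (fun g => ∑ u : Γ, a.coeff u * b.coeff (g * u⁻¹ * g⁻¹)) (fun g => by simp)]
    rw [hC, Finset.sum_comm]
  rw [hR, inv_mul_eq_iff_eq_mul₀ hcard]
  have hterm : ∀ y : Γ, Φ a y * Φ b y⁻¹
      = ∑ g : Γ, ∑ h : Γ, a.coeff (g * y⁻¹ * g⁻¹) * b.coeff (h * y * h⁻¹) := by
    intro y
    rw [hPhi, hPhi, Finset.sum_mul_sum]
    simp
  rw [Finset.sum_congr rfl fun y _ => hterm y, Finset.sum_comm]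
  rw [show (Fintype.card Γ : k) * C = ∑ _g : Γ, C by
    rw [Finset.sum_const, Finset.card_univ, nsmul_eq_mul]]
  refine Finset.sum_congr rfl fun g _ => ?_
  rw [hC]
  refine Fintype.sum_equiv ((Equiv.inv Γ).trans ((Equiv.mulLeft g).trans (Equiv.mulRight g⁻¹)))
    _ _ fun y => ?_
  refine Fintype.sum_equiv (Equiv.mulRight g⁻¹) _ _ fun h => ?_
  simp [mul_assoc, mul_inv_rev]
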